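/- In the coarse Banach-Stone setup with 1 − ε(M) − ε(M)M > 0, the map φ : X → Y defined by {φ(x)} = S^D_m(x) (for m large) is continuous, and since ψ : Y → X is its two-sided inverse, φ is a homeomorphism of X onto Y. -/

import Mathlib

open Filter Topology

/-- A bundled nonempty directed index set (for Moore–Smith nets). -/
structure DirIndex : Type 1 where
  ι : Type
  [pre : Preorder ι]
  [dir : IsDirected ι (· ≤ ·)]
  [ne : Nonempty ι]

attribute [instance] DirIndex.pre DirIndex.dir DirIndex.ne

/-- `f` is an `m`-peak net at `x`: `‖f σ‖ = |f σ x| = m` for all `σ`, and `f σ → 0`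
uniformly on the complement of every open neighborhood of `x`. -/
def IsPeakNet {X : Type} [TopologicalSpace X] [CompactSpace X] (I : DirIndex)
    (f : I.ι → C(X, ℝ)) (m : ℝ) (x : X) : Prop :=
  (∀ σ, ‖f σ‖ = m ∧ |f σ x| = m) ∧
  ∀ U : Set X, IsOpen U → x ∈ U →
    TendstoUniformlyOn (fun σ => ⇑(f σ)) 0 atTop Uᶜ

/-- The set `S^D_m(x) ⊆ Y`: limits `y` of nets `y_σ` such that some `m`-peak net `f_σ` at `x`
satisfies `T f_σ (y_σ) ≥ D m` and `T (-f_σ) (y_σ) ≤ -D m`. -/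
def SD {X Y : Type} [TopologicalSpace X] [CompactSpace X] [TopologicalSpace Y]
    (T : C(X, ℝ) → C(Y, ℝ)) (D m : ℝ) (x : X) : Set Y :=
  { y | ∃ (I : DirIndex) (f : I.ι → C(X, ℝ)) (yσ : I.ι → Y),
      IsPeakNet I f m x ∧ Tendsto yσ atTop (𝓝 y) ∧
      ∀ σ, D * m ≤ T (f σ) (yσ σ) ∧ T (-(f σ)) (yσ σ) ≤ -(D * m) }

/-- The map `φ` obtained from `S^D_m` is continuous, and (having the two-sided inverse `ψ`)
is a homeomorphism of `X` onto `Y`. -/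
theorem stmt_11 {X Y : Type} [TopologicalSpace X] [CompactSpace X] [T2Space X]
    [TopologicalSpace Y] [CompactSpace Y] [T2Space Y]
    (M L D : ℝ) (hM1 : 1 ≤ M) (hM2 : M < Real.sqrt 2) (hL : 0 ≤ L)
    (hD0 : 0 < D) (hD : D < 2 / M - M)
    (T : C(X, ℝ) → C(Y, ℝ)) (T' : C(Y, ℝ) → C(X, ℝ))
    (hbij : Function.Bijective T) (h0 : T 0 = 0)
    (hinv₁ : Function.LeftInverse T' T) (hinv₂ : Function.RightInverse T' T)
    (hTlow : ∀ f g : C(X, ℝ), (1 / M) * ‖f - g‖ - L ≤ ‖T f - T g‖)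
    (hTup : ∀ f g : C(X, ℝ), ‖T f - T g‖ ≤ M * ‖f - g‖ + L)
    (hT'low : ∀ f g : C(Y, ℝ), (1 / M) * ‖f - g‖ - L ≤ ‖T' f - T' g‖)
    (hT'up : ∀ f g : C(Y, ℝ), ‖T' f - T' g‖ ≤ M * ‖f - g‖ + L)
    (hε : 0 < 1 - (2 * M - 1 - D) * M - (2 * M - 1 - D))
    (m₁ : ℝ) (hm₁ : 0 ≤ m₁)
    (φ : X → Y) (ψ : Y → X)
    (hφ : ∀ m : ℝ, M * m₁ + L < m → ∀ x : X, SD T D m x = {φ x})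
    (hψ : ∀ m : ℝ, M * m₁ + L < m → ∀ y : Y, SD T' D m y = {ψ y})
    (hφψ : Function.LeftInverse ψ φ) (hψφ : Function.RightInverse ψ φ)
    (m₂ : ℝ) (hm₂ : 0 ≤ m₂)
    (hest : ∀ f : C(X, ℝ), m₂ ≤ ‖f‖ → ∀ x : X,
      |f x| - (2 * M - 1 - D) * M * ‖f‖ - ((2 * M - 1 - D) + 1) * L ≤ |T f (φ x)| ∧
      |T f (φ x)| ≤ |f x| + (2 * M - 1 - D) * ‖f‖ + L) :
    Continuous φ ∧ IsHomeomorph φ := by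
  set ε : ℝ := 2 * M - 1 - D with hεdef
  -- Key step: every cluster point of `φ` along `𝓝 x` equals `φ x`.
  have key : ∀ (x : X) (y : Y), ClusterPt y (Filter.map φ (𝓝 x)) → y = φ x := by
    intro x y hcl
    by_contra hne
    -- the point `ψ y` maps to `y` and differs from `x`
    have hψy : φ (ψ y) = y := hψφ y
    have hxne : ψ y ≠ x := fun h => hne (by rw [← hψy, h])
    -- Urysohn function: 0 at ψ y, 1 at x, values in [0,1]
    obtain ⟨f₀, hf₀0, hf₀1, hf₀mem⟩ :=
      exists_continuous_zero_one_of_isClosed (isClosed_singleton (x := ψ y))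
        (isClosed_singleton (x := x)) (by simpa [Set.disjoint_singleton] using hxne)
    have hf₀x : f₀ x = 1 := by simpa using hf₀1 rfl
    have hf₀ψ : f₀ (ψ y) = 0 := by simpa using hf₀0 rfl
    have hf₀norm : ‖f₀‖ = 1 := by
      refine le_antisymm ((ContinuousMap.norm_le _ zero_le_one).2 fun z => ?_) ?_
      · have := hf₀mem z
        rw [Real.norm_eq_abs, abs_le]
        constructor <;> linarith [this.1, this.2]
      · calc (1 : ℝ) = ‖f₀ x‖ := by rw [hf₀x]; simp
          _ ≤ ‖f₀‖ := f₀.norm_coe_le_norm x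
    -- choose m large
    set m : ℝ := max m₂ (((ε + 2) * L + 1) / (1 - ε * M - ε)) with hmdef
    have hm2 : m₂ ≤ m := le_max_left _ _
    have hm0 : 0 ≤ m := le_trans hm₂ hm2
    have hmbig : (ε + 2) * L + 1 ≤ m * (1 - ε * M - ε) := by
      have h1 : ((ε + 2) * L + 1) / (1 - ε * M - ε) ≤ m := le_max_right _ _
      calc (ε + 2) * L + 1 = ((ε + 2) * L + 1) / (1 - ε * M - ε) * (1 - ε * M - ε) := by
            field_simp
        _ ≤ m * (1 - ε * M - ε) := by
            apply mul_le_mul_of_nonneg_right h1 (le_of_lt hε)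
    set f : C(X, ℝ) := m • f₀ with hfdef
    have hfx : f x = m := by simp [hfdef, hf₀x]
    have hfψ : f (ψ y) = 0 := by simp [hfdef, hf₀ψ]
    have hfnorm : ‖f‖ = m := by
      refine le_antisymm ((ContinuousMap.norm_le _ hm0).2 fun z => ?_) ?_
      · have hz := hf₀mem z
        have : f z = m * f₀ z := by simp [hfdef]
        rw [this, Real.norm_eq_abs, abs_mul, abs_of_nonneg hm0, abs_of_nonneg hz.1]
        nlinarith [hz.2]
      · calc m = ‖f x‖ := by rw [hfx, Real.norm_eq_abs, abs_of_nonneg hm0]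
          _ ≤ ‖f‖ := f.norm_coe_le_norm x
    have hfm2 : m₂ ≤ ‖f‖ := by rw [hfnorm]; exact hm2
    -- upper bound at ψ y
    have hup : |T f y| ≤ ε * m + L := by
      have := (hest f hfm2 (ψ y)).2
      rw [hψy, hfψ, hfnorm] at this
      simpa using this
    -- lower bound from cluster point
    have hlow : m - ε * M * m - (ε + 1) * L ≤ |T f y| := by
      refine le_of_forall_pos_le_add fun δ hδ => ?_
      have hδ2 : 0 < δ / 2 := by linarith
      -- neighborhoods
      have hU : (T f) ⁻¹' Metric.ball (T f y) (δ / 2) ∈ 𝓝 y :=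
        (T f).continuous.continuousAt.preimage_mem_nhds (Metric.ball_mem_nhds _ hδ2)
      have hV : φ '' (f ⁻¹' Metric.ball (f x) (δ / 2)) ∈ Filter.map φ (𝓝 x) := by
        rw [Filter.mem_map]
        exact Filter.mem_of_superset
          (f.continuous.continuousAt.preimage_mem_nhds (Metric.ball_mem_nhds _ hδ2))
          (Set.subset_preimage_image φ _)
      obtain ⟨y', hy'U, hy'V⟩ := clusterPt_iff_nonempty.1 hcl hU hV
      obtain ⟨x', hx'V, rfl⟩ := hy'V
      have h1 : |T f (φ x') - T f y| < δ / 2 := by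
        have := hy'U
        simpa [Real.dist_eq] using this
      have h2 : |f x' - m| < δ / 2 := by
        have := hx'V
        rw [Set.mem_preimage, Metric.mem_ball, Real.dist_eq, hfx] at this
        exact this
      have h3 : m - δ / 2 ≤ |f x'| := by
        have h2' := abs_lt.1 h2
        linarith [le_abs_self (f x')]
      have h4 := (hest f hfm2 x').1
      rw [hfnorm] at h4
      have h5 : |T f (φ x')| - δ / 2 ≤ |T f y| := by
        have := abs_sub_abs_le_abs_sub (T f (φ x')) (T f y)
        linarith [le_abs_self (|T f (φ x')| - |T f y|)]
      linarith
    linarith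
  -- continuity from the key step, by compactness of Y
  have hcont : Continuous φ := by
    rw [continuous_iff_continuousAt]
    intro x
    unfold ContinuousAt
    by_contra hnot
    -- there is an open W ∋ φ x with φ ⁻¹' W ∉ 𝓝 x
    rw [Filter.tendsto_iff_forall_eventually_mem] at hnot
    push_neg at hnot
    obtain ⟨s, hs, hsnot⟩ := hnot
    obtain ⟨W, hWs, hWopen, hWmem⟩ := mem_nhds_iff.1 hs
    have hWnot : φ ⁻¹' W ∉ 𝓝 x := by
      intro h
      exact hsnot (Filter.mem_of_superset h fun z hz => not_not_intro (hWs hz))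
    -- the filter of values outside W is nontrivial
    have hNB : Filter.NeBot (Filter.map φ (𝓝 x) ⊓ Filter.principal Wᶜ) := by
      rw [Filter.inf_principal_neBot_iff]
      intro U hU
      rw [Filter.mem_map] at hU
      by_contra hempty
      rw [Set.not_nonempty_iff_eq_empty] at hempty
      have hUW : U ⊆ W := by
        intro z hz
        by_contra hzW
        exact absurd hempty (Set.nonempty_iff_ne_empty.1 ⟨z, hz, hzW⟩)
      exact hWnot (Filter.mem_of_superset hU fun z hz => hUW hz)
    -- take a cluster point in the compact space Y
    obtain ⟨y, hy⟩ := exists_clusterPt_of_compactSpace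
      (Filter.map φ (𝓝 x) ⊓ Filter.principal Wᶜ)
    have hy1 : ClusterPt y (Filter.map φ (𝓝 x)) := hy.mono inf_le_left
    have hy2 : y ∈ Wᶜ := by
      have : ClusterPt y (Filter.principal Wᶜ) := hy.mono inf_le_right
      have hclosed : IsClosed Wᶜ := hWopen.isClosed_compl
      exact hclosed.closure_eq ▸ mem_closure_iff_clusterPt.2 this
    exact hy2 (key x y hy1 ▸ hWmem)
  refine ⟨hcont, ?_⟩
  rw [isHomeomorph_iff_continuous_bijective]
  exact ⟨hcont, hφψ.injective, hψφ.surjective⟩
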